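/- Corollary (common utility function): under the hypotheses of the main theorem, if Pareto-star holds and u is a nonconstant function such that for each individual i ∈ {1,...,n} there exists u_i ∈ U_i with u_i = a_i u + b_i·1 for some a_i > 0, b_i ∈ ℝ, then there exists u_0 ∈ U_0 with u_0 = a u + b·1 for some a > 0, b ∈ ℝ. -/

import Mathlib

open Finset

/-- Expected utility of lottery `l` with utility `u`. -/
def EU {Z : Type*} [Fintype Z] (l u : Z → ℝ) : ℝ := ∑ z, l z * u z

/-- `l` is a lottery (probability distribution) on `Z`. -/
def IsLottery {Z : Type*} [Fintype Z] (l : Z → ℝ) : Prop :=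
  (∀ z, 0 ≤ l z) ∧ ∑ z, l z = 1

/-- Expected multi-utility preference: `l ≿ l'` under the set `U`. -/
def Pref {Z : Type*} [Fintype Z] (U : Set (Z → ℝ)) (l l' : Z → ℝ) : Prop :=
  ∀ u ∈ U, EU l' u ≤ EU l u

/-- `u` is nonconstant. -/
def Nonconst {Z : Type*} (u : Z → ℝ) : Prop := ∃ z z', u z ≠ u z'

/-- The cone over a compact set avoiding the origin is closed. -/
lemma coneClosed {E : Type*} [NormedAddCommGroup E] [NormedSpace ℝ E] {A : Set E}
    (hA : IsCompact A) (h0 : (0:E) ∉ A) :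
    IsClosed {y : E | ∃ t : ℝ, 0 ≤ t ∧ ∃ x ∈ A, y = t • x} := by
  rcases A.eq_empty_or_nonempty with he | hne
  · have : {y : E | ∃ t : ℝ, 0 ≤ t ∧ ∃ x ∈ A, y = t • x} = ∅ := by
      ext y; simp [he]
    rw [this]; exact isClosed_empty
  obtain ⟨x₀, hx₀A, hx₀min⟩ := hA.exists_isMinOn hne continuous_norm.continuousOn
  have hδ : 0 < ‖x₀‖ := by
    rw [norm_pos_iff]
    rintro rfl; exact h0 hx₀A
  apply IsSeqClosed.isClosed
  intro y yl hy hyl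
  choose t ht x hx hyx using hy
  have hbdd : ∃ C : ℝ, ∀ n, ‖y n‖ ≤ C := by
    obtain ⟨C, hC⟩ := (hyl.norm.bddAbove_range)
    exact ⟨C, fun n => hC ⟨n, rfl⟩⟩
  obtain ⟨C, hC⟩ := hbdd
  have htbdd : ∀ n, t n ∈ Set.Icc (0:ℝ) (C / ‖x₀‖) := by
    intro n
    refine ⟨ht n, ?_⟩
    have h1 : ‖y n‖ = t n * ‖x n‖ := by
      rw [hyx n, norm_smul, Real.norm_eq_abs, abs_of_nonneg (ht n)]
    have h2 : ‖x₀‖ ≤ ‖x n‖ := hx₀min (hx n)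
    have : t n * ‖x₀‖ ≤ C := by
      calc t n * ‖x₀‖ ≤ t n * ‖x n‖ := mul_le_mul_of_nonneg_left h2 (ht n)
        _ = ‖y n‖ := h1.symm
        _ ≤ C := hC n
    rw [le_div_iff₀ hδ]
    exact this
  obtain ⟨a, haA, φ, hφ, hxa⟩ := hA.tendsto_subseq hx
  obtain ⟨t₀, ht₀, ψ, hψ, htt⟩ := (isCompact_Icc (a := (0:ℝ)) (b := C / ‖x₀‖)).tendsto_subseq
    (fun n => htbdd (φ n))
  have hxs : Filter.Tendsto (fun k => x (φ (ψ k))) Filter.atTop (nhds a) :=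
    hxa.comp hψ.tendsto_atTop
  have hts : Filter.Tendsto (fun k => t (φ (ψ k))) Filter.atTop (nhds t₀) := htt
  have hsm : Filter.Tendsto (fun k => t (φ (ψ k)) • x (φ (ψ k))) Filter.atTop (nhds (t₀ • a)) :=
    hts.smul hxs
  have hys : Filter.Tendsto (fun k => y (φ (ψ k))) Filter.atTop (nhds yl) :=
    hyl.comp ((hφ.comp hψ).tendsto_atTop)
  have : yl = t₀ • a := by
    apply tendsto_nhds_unique hys
    convert hsm using 2 with k
    exact hyx (φ (ψ k))
  exact ⟨t₀, ht₀.1, a, haA, this⟩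

theorem corollary_common_utility
    {Z : Type*} [Fintype Z] [Nonempty Z] {n : ℕ} (hn : 0 < n)
    (U : Fin n → Set (Z → ℝ)) (U₀ : Set (Z → ℝ))
    (hUne : ∀ i, (U i).Nonempty) (hU₀ne : U₀.Nonempty)
    (hUcpt : ∀ i, IsCompact (U i)) (hU₀cpt : IsCompact U₀)
    (hUcvx : ∀ i, Convex ℝ (U i)) (hU₀cvx : Convex ℝ U₀)
    (hUnc : ∀ i, ∀ u ∈ U i, Nonconst u) (hU₀nc : ∀ u ∈ U₀, Nonconst u)
    (hnc : ∃ zs zi : Z, (∀ i, ∀ u ∈ U i, u zi < u zs) ∧ (∀ u ∈ U₀, u zi < u zs))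
    (hps : ∀ l l' : Z → ℝ, IsLottery l → IsLottery l' →
      (∀ i, ¬ Pref (U i) l l') → ¬ Pref U₀ l l')
    (u : Z → ℝ) (hu : Nonconst u)
    (hcommon : ∀ i, ∃ v ∈ U i, ∃ a : ℝ, ∃ b : ℝ, 0 < a ∧ v = fun z => a * u z + b) :
    ∃ u₀ ∈ U₀, ∃ a : ℝ, ∃ b : ℝ, 0 < a ∧ u₀ = fun z => a * u z + b := by
  classical
  have hNpos : 0 < ((Fintype.card Z : ℕ) : ℝ) := by
    have := Fintype.card_pos (α := Z)
    exact_mod_cast this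
  set m : (Z → ℝ) → ℝ := fun w => (∑ z, w z) / (Fintype.card Z : ℝ) with hm
  set π : (Z → ℝ) → (Z → ℝ) := fun w z => w z - m w with hπ
  -- π kills constants iff constant
  have hπzero : ∀ w : Z → ℝ, Nonconst w → π w ≠ 0 := by
    intro w hw hcontra
    obtain ⟨z1, z2, hz⟩ := hw
    have h1 : w z1 - m w = 0 := congrFun hcontra z1
    have h2 : w z2 - m w = 0 := congrFun hcontra z2
    exact hz (by linarith)
  -- m is linear
  have hmadd : ∀ w1 w2 : Z → ℝ, m (w1 + w2) = m w1 + m w2 := by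
    intro w1 w2
    simp only [hm, Pi.add_apply, Finset.sum_add_distrib, add_div]
  have hmsmul : ∀ (c : ℝ) (w : Z → ℝ), m (c • w) = c * m w := by
    intro c w
    simp only [hm, Pi.smul_apply, smul_eq_mul, ← Finset.mul_sum, mul_div_assoc]
  have hπlin : IsLinearMap ℝ π := by
    constructor
    · intro w1 w2; funext z
      simp only [hπ, Pi.add_apply, hmadd]; ring
    · intro c w; funext z
      simp only [hπ, Pi.smul_apply, smul_eq_mul, hmsmul]; ring
  by_cases hmem : ∃ t : ℝ, 0 ≤ t ∧ ∃ x ∈ π '' U₀, π u = t • x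
  · -- the easy case: π u is in the cone over π '' U₀
    obtain ⟨t, htnn, x, ⟨w, hwU₀, rfl⟩, heq⟩ := hmem
    have ht : 0 < t := by
      rcases lt_or_eq_of_le htnn with h | h
      · exact h
      · exfalso
        apply hπzero u hu
        rw [heq, ← h, zero_smul]
    refine ⟨w, hwU₀, t⁻¹, m w - t⁻¹ * m u, by positivity, ?_⟩
    funext z
    have h := congrFun heq z
    simp only [hπ, Pi.smul_apply, smul_eq_mul] at h
    have ht' : t ≠ 0 := ne_of_gt ht
    field_simp
    linarith [h, mul_comm t (w z)]
  · -- separation case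
    push_neg at hmem
    have hπcont : Continuous π := by
      apply continuous_pi
      intro z
      exact (continuous_apply z).sub
        ((continuous_finset_sum _ (fun i _ => continuous_apply i)).div_const _)
    set A : Set (Z → ℝ) := π '' U₀ with hA
    have hAcpt : IsCompact A := hU₀cpt.image hπcont
    have hA0 : (0 : Z → ℝ) ∉ A := by
      rintro ⟨w, hwU₀, hw0⟩
      exact hπzero w (hU₀nc w hwU₀) hw0
    set K : Set (Z → ℝ) := {y | ∃ t : ℝ, 0 ≤ t ∧ ∃ x ∈ A, y = t • x} with hK
    have hKclosed : IsClosed K := coneClosed hAcpt hA0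
    have hKconvex : Convex ℝ K := by
      rintro y1 ⟨t1, ht1, x1, hx1, rfl⟩ y2 ⟨t2, ht2, x2, hx2, rfl⟩ a b ha hb hab
      by_cases hs : a * t1 + b * t2 = 0
      · have h1 : a * t1 = 0 := by nlinarith [mul_nonneg ha ht1, mul_nonneg hb ht2]
        have h2 : b * t2 = 0 := by nlinarith [mul_nonneg ha ht1, mul_nonneg hb ht2]
        refine ⟨0, le_refl _, x1, hx1, ?_⟩
        rw [smul_smul, smul_smul, h1, h2]
        simp
      · have hspos : 0 < a * t1 + b * t2 :=
          lt_of_le_of_ne (add_nonneg (mul_nonneg ha ht1) (mul_nonneg hb ht2)) (Ne.symm hs)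
        have hsne : a * t1 + b * t2 ≠ 0 := hs
        refine ⟨a * t1 + b * t2, le_of_lt hspos,
          (a * t1 / (a * t1 + b * t2)) • x1 + (b * t2 / (a * t1 + b * t2)) • x2, ?_, ?_⟩
        · have hAconv : Convex ℝ A := hU₀cvx.is_linear_image hπlin
          apply hAconv hx1 hx2 (div_nonneg (mul_nonneg ha ht1) hspos.le)
            (div_nonneg (mul_nonneg hb ht2) hspos.le)
          field_simp
        · rw [smul_add, smul_smul, smul_smul, smul_smul, smul_smul]
          have e1 : (a * t1 + b * t2) * (a * t1 / (a * t1 + b * t2)) = a * t1 := by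
            field_simp
          have e2 : (a * t1 + b * t2) * (b * t2 / (a * t1 + b * t2)) = b * t2 := by
            field_simp
          rw [e1, e2]
    have hπuK : π u ∉ K := by
      rintro ⟨t, htnn, x, hxA, heq⟩
      exact hmem t htnn x hxA heq
    obtain ⟨f, s, hfK, hfu⟩ := geometric_hahn_banach_closed_point hKconvex hKclosed hπuK
    -- 0 ∈ K, so 0 < s
    have h0K : (0 : Z → ℝ) ∈ K := by
      obtain ⟨w, hw⟩ := hU₀ne
      exact ⟨0, le_refl _, π w, ⟨w, hw, rfl⟩, by simp⟩
    have hspos : 0 < s := by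
      have := hfK 0 h0K
      simpa using this
    -- f ≤ 0 on A
    have hfA : ∀ x ∈ A, f x ≤ 0 := by
      intro x hxA
      by_contra hpos
      push_neg at hpos
      have hmem' : ((s + 1) / f x) • x ∈ K :=
        ⟨(s + 1) / f x, by positivity, x, hxA, rfl⟩
      have := hfK _ hmem'
      rw [map_smul, smul_eq_mul] at this
      rw [div_mul_cancel₀] at this
      · linarith
      · exact ne_of_gt hpos
    -- the separating "direction": d z = m d₀ - d₀ z, where d₀ z = f (single z)
    set d₀ : Z → ℝ := fun z => f (Pi.single z 1) with hd₀
    set d : Z → ℝ := fun z => m d₀ - d₀ z with hd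
    -- representation of f
    have hrep : ∀ w : Z → ℝ, f w = ∑ z, w z * d₀ z := by
      intro w
      have hw : ∑ z, Pi.single z (w z) = w := Finset.univ_sum_single w
      conv_lhs => rw [← hw]
      rw [map_sum]
      apply Finset.sum_congr rfl
      intro z _
      have hsingle : Pi.single z (w z) = w z • (Pi.single z 1 : Z → ℝ) := by
        funext j
        by_cases hj : z = j <;> simp [Pi.single_apply, hj]
      rw [hsingle, map_smul, smul_eq_mul]
    have hkey : ∀ w : Z → ℝ, ∑ z, d z * w z = -(f (π w)) := by
      intro w
      have h1 : f (π w) = f w - m w * f (fun _ => (1:ℝ)) := by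
        have : π w = w - (m w) • (fun _ => (1:ℝ)) := by
          funext z; simp [hπ]
        rw [this, map_sub, map_smul, smul_eq_mul]
      have h2 : f (fun _ => (1:ℝ)) = ∑ z, d₀ z := by
        rw [hrep]; simp
      have h3 : f w = ∑ z, w z * d₀ z := hrep w
      have h4 : ∑ z, d z * w z = m d₀ * (∑ z, w z) - ∑ z, w z * d₀ z := by
        simp only [hd, sub_mul]
        rw [Finset.sum_sub_distrib, ← Finset.mul_sum]
        congr 1
        apply Finset.sum_congr rfl
        intro z _
        ring
      rw [h4, h1, h2, h3]
      have h5 : m d₀ * (∑ z, w z) = m w * ∑ z, d₀ z := by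
        simp only [hm]
        field_simp
      rw [h5]
      ring
    -- key inequalities
    have hdU₀ : ∀ w ∈ U₀, 0 ≤ ∑ z, d z * w z := by
      intro w hw
      rw [hkey]
      have := hfA (π w) ⟨w, hw, rfl⟩
      linarith
    have hdu : ∑ z, d z * u z < 0 := by
      rw [hkey]
      linarith
    have hdsum : ∑ z, d z = 0 := by
      simp only [hd, Finset.sum_sub_distrib, Finset.sum_const, card_univ, nsmul_eq_mul]
      simp only [hm]
      field_simp
      ring
    -- build the lotteries
    set M : ℝ := ∑ z, |d z| with hM
    have hMnn : 0 ≤ M := Finset.sum_nonneg fun z _ => abs_nonneg _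
    have hdb : ∀ z, |d z| ≤ M := by
      intro z
      exact Finset.single_le_sum (f := fun z => |d z|) (fun i _ => abs_nonneg _) (mem_univ z)
    set ε : ℝ := (((Fintype.card Z : ℝ)) * (M + 1))⁻¹ with hε
    have hεpos : 0 < ε := by positivity
    have hεM : ε * M ≤ ((Fintype.card Z : ℝ))⁻¹ := by
      rw [hε]
      rw [mul_inv]
      rw [mul_comm ((Fintype.card Z : ℝ))⁻¹ _, mul_assoc]
      have h1 : (M + 1)⁻¹ * M ≤ 1 := by
        rw [inv_mul_le_iff₀ (by linarith)]
        linarith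
      have h2 : (0:ℝ) ≤ ((Fintype.card Z : ℝ))⁻¹ := le_of_lt (by positivity)
      calc (M + 1)⁻¹ * (((Fintype.card Z : ℝ))⁻¹ * M)
          = (M + 1)⁻¹ * M * ((Fintype.card Z : ℝ))⁻¹ := by ring
        _ ≤ 1 * ((Fintype.card Z : ℝ))⁻¹ := by
            apply mul_le_mul_of_nonneg_right h1 h2
        _ = ((Fintype.card Z : ℝ))⁻¹ := one_mul _
    set l : Z → ℝ := fun z => ((Fintype.card Z : ℝ))⁻¹ + ε * d z with hl
    set l' : Z → ℝ := fun z => ((Fintype.card Z : ℝ))⁻¹ - ε * d z with hl'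
    have hlL : IsLottery l := by
      constructor
      · intro z
        have h0 : -M ≤ d z := by
          have := neg_abs_le (d z)
          have := hdb z
          linarith
        have h2 : -(ε * M) ≤ ε * d z := by nlinarith [hεpos.le]
        show (0:ℝ) ≤ ((Fintype.card Z : ℝ))⁻¹ + ε * d z
        clear_value M ε d
        linarith [hεM]
      · simp only [hl, Finset.sum_add_distrib, Finset.sum_const, card_univ, nsmul_eq_mul,
          ← Finset.mul_sum, hdsum, mul_zero, add_zero]
        field_simp
    have hl'L : IsLottery l' := by
      constructor
      · intro z
        have h1 : d z ≤ M := le_trans (le_abs_self _) (hdb z)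
        have h2 : ε * d z ≤ ε * M := by nlinarith [hεpos.le]
        show (0:ℝ) ≤ ((Fintype.card Z : ℝ))⁻¹ - ε * d z
        clear_value M ε d
        linarith [hεM]
      · simp only [hl', Finset.sum_sub_distrib, Finset.sum_const, card_univ, nsmul_eq_mul,
          ← Finset.mul_sum, hdsum, mul_zero, sub_zero]
        field_simp
    -- EU difference formula
    have hEU : ∀ w : Z → ℝ, EU l w - EU l' w = 2 * ε * ∑ z, d z * w z := by
      intro w
      simp only [EU, hl, hl', ← Finset.sum_sub_distrib, Finset.mul_sum]
      apply Finset.sum_congr rfl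
      intro z _
      ring
    -- strict preference for each individual
    have hind : ∀ i, ¬ Pref (U i) l l' := by
      intro i hpref
      obtain ⟨v, hvU, a, b, hapos, hveq⟩ := hcommon i
      have hdv : ∑ z, d z * v z = a * ∑ z, d z * u z := by
        calc ∑ z, d z * v z = ∑ z, (a * (d z * u z) + b * d z) := by
              apply Finset.sum_congr rfl
              intro z _
              simp only [hveq]
              ring
          _ = a * (∑ z, d z * u z) + b * ∑ z, d z := by
              rw [Finset.sum_add_distrib, ← Finset.mul_sum, ← Finset.mul_sum]
          _ = a * ∑ z, d z * u z := by rw [hdsum]; ring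
      have := hpref v hvU
      have hlt : EU l v - EU l' v < 0 := by
        rw [hEU, hdv]
        have : a * ∑ z, d z * u z < 0 := mul_neg_of_pos_of_neg hapos hdu
        nlinarith
      linarith
    -- but society weakly prefers l to l'
    have hsoc : Pref U₀ l l' := by
      intro w hw
      have h := hdU₀ w hw
      have := hEU w
      nlinarith
    exact absurd hsoc (hps l l' hlL hl'L hind)
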